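/- Let A be a finite nonempty set, let ref ∈ Δ(A) be strictly positive, let C ≥ 0, and let p, p' ∈ Δ(A) be such that |log(p(a)/ref(a))| ≤ C and |log(p'(a)/ref(a))| ≤ C for all a ∈ A (in particular p and p' are strictly positive). Then |KL(p‖ref) − KL(p'‖ref)| ≤ (1 + C)·‖p − p'‖₁. -/

import Mathlib

open Finset

/-- The probability simplex on a finite type: nonnegative entries summing to one. -/
def IsSimplex {A : Type*} [Fintype A] (p : A → ℝ) : Prop :=
  (∀ a, 0 ≤ p a) ∧ ∑ a, p a = 1

/-- KL divergence between two distributions on a finite type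
(with the convention `0 * log 0 = 0`, which holds in Lean since `Real.log 0 = 0`). -/
noncomputable def KLdiv {A : Type*} [Fintype A] (p q : A → ℝ) : ℝ :=
  ∑ a, p a * Real.log (p a / q a)

private lemma key (r x y C : ℝ) (hr : 0 < r) (hx : 0 ≤ x) (hxy : x ≤ y) (hC : 0 ≤ C)
    (hly : |Real.log (y / r)| ≤ C) :
    |x * Real.log (x / r) - y * Real.log (y / r)| ≤ (1 + C) * (y - x) := by
  have hy : 0 ≤ y := hx.trans hxy
  rcases eq_or_lt_of_le hx with h0 | hxpos
  · -- x = 0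
    rw [← h0]
    simp only [div_eq_mul_inv, zero_mul, zero_sub, abs_neg, abs_mul, sub_zero, abs_of_nonneg hy]
    calc y * |Real.log (y * r⁻¹)| ≤ y * C := by
          exact mul_le_mul_of_nonneg_left (by simpa [div_eq_mul_inv] using hly) hy
      _ ≤ (1 + C) * y := by nlinarith
  · have hypos : 0 < y := lt_of_lt_of_le hxpos hxy
    have hid : x * Real.log (x / r) - y * Real.log (y / r)
        = (x - y) * Real.log (y / r) + x * Real.log (x / y) := by
      rw [Real.log_div (ne_of_gt hxpos) (ne_of_gt hr),
          Real.log_div (ne_of_gt hypos) (ne_of_gt hr),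
          Real.log_div (ne_of_gt hxpos) (ne_of_gt hypos)]
      ring
    have hD1 : x * Real.log (x / y) ≤ 0 := by
      apply mul_nonpos_of_nonneg_of_nonpos hx
      exact Real.log_nonpos (by positivity) ((div_le_one hypos).mpr hxy)
    have hD2 : x - y ≤ x * Real.log (x / y) := by
      have h1 : Real.log (y / x) ≤ y / x - 1 :=
        Real.log_le_sub_one_of_pos (by positivity)
      have h2 : Real.log (x / y) = -Real.log (y / x) := by
        rw [← Real.log_inv, inv_div]
      rw [h2]
      have := mul_le_mul_of_nonneg_left h1 hx
      have hxne : x ≠ 0 := ne_of_gt hxpos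
      calc x - y = -(x * (y / x - 1)) := by field_simp; ring
        _ ≤ -(x * Real.log (y / x)) := by linarith
        _ = x * -Real.log (y / x) := by ring
    rw [hid]
    have habs : |x * Real.log (x / y)| ≤ y - x := by
      rw [abs_le]; constructor <;> linarith
    calc |(x - y) * Real.log (y / r) + x * Real.log (x / y)|
        ≤ |(x - y) * Real.log (y / r)| + |x * Real.log (x / y)| := abs_add_le _ _
      _ ≤ (y - x) * C + (y - x) := by
          apply add_le_add _ habs
          rw [abs_mul, abs_sub_comm, abs_of_nonneg (by linarith : 0 ≤ y - x)]
          exact mul_le_mul_of_nonneg_left hly (by linarith)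
      _ = (1 + C) * (y - x) := by ring

/-- Lipschitzness of `p ↦ KL(p‖ref)` on the class of distributions with
log-density ratio bounded by `C` relative to `ref`:
`|KL(p‖ref) − KL(p'‖ref)| ≤ (1 + C) ‖p − p'‖₁`. -/
theorem stmt13 {A : Type*} [Fintype A] [Nonempty A]
    (ref : A → ℝ) (href : IsSimplex ref) (hrefpos : ∀ a, 0 < ref a)
    (C : ℝ) (hC : 0 ≤ C)
    (p p' : A → ℝ) (hp : IsSimplex p) (hp' : IsSimplex p')
    (hlog : ∀ a, |Real.log (p a / ref a)| ≤ C)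
    (hlog' : ∀ a, |Real.log (p' a / ref a)| ≤ C) :
    |KLdiv p ref - KLdiv p' ref| ≤ (1 + C) * ∑ a, |p a - p' a| := by
  rw [KLdiv, KLdiv, ← Finset.sum_sub_distrib, Finset.mul_sum]
  calc |∑ a, (p a * Real.log (p a / ref a) - p' a * Real.log (p' a / ref a))|
      ≤ ∑ a, |p a * Real.log (p a / ref a) - p' a * Real.log (p' a / ref a)| :=
        Finset.abs_sum_le_sum_abs _ _
    _ ≤ ∑ a, (1 + C) * |p a - p' a| := by
        apply Finset.sum_le_sum
        intro a _
        rcases le_total (p a) (p' a) with h | h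
        · rw [abs_of_nonpos (by linarith : p a - p' a ≤ 0)]
          have := key (ref a) (p a) (p' a) C (hrefpos a) (hp.1 a) h hC (hlog' a)
          linarith [this]
        · rw [abs_of_nonneg (by linarith : (0:ℝ) ≤ p a - p' a)]
          have := key (ref a) (p' a) (p a) C (hrefpos a) (hp'.1 a) h hC (hlog a)
          rw [abs_sub_comm]
          linarith [this]
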